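/- arXiv:2011.09319 — 6 statements merged into one kernel-verified Lean document; each statement's English description precedes it below -/
import Mathlib

section
/- If F is a Banach lattice with the weak Dunford–Pettis property and G ⊆ F is a sublattice which is the range of a bounded linear projection P : F → F, then G has the weak Dunford–Pettis property. -/
open Filter Topology

noncomputable section

/-- A set `A` in a normed space is relatively weakly compact if its closure in the weak
topology is compact. -/
def RelWeaklyCompact {Y : Type*} [NormedAddCommGroup Y] [NormedSpace ℝ Y] (A : Set Y) : Prop :=
  IsCompact (closure (toWeakSpace ℝ Y '' A))

/-- A sequence in a normed space is weakly null if it tends to `0` in the weak topology. -/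
def WeaklyNullSeq {F : Type*} [NormedAddCommGroup F] [NormedSpace ℝ F] (x : ℕ → F) : Prop :=
  Tendsto (fun n => toWeakSpace ℝ F (x n)) atTop (𝓝 0)

/-- The weak Dunford–Pettis property of a Banach lattice `F`: every weakly compact operator
from `F` into a Banach space maps disjoint weakly null sequences to norm null sequences. -/
def HasWDP (F : Type*) [NormedAddCommGroup F] [Lattice F] [IsOrderedAddMonoid F] [HasSolidNorm F]
    [NormedSpace ℝ F] : Prop :=
  ∀ (Y : Type) [NormedAddCommGroup Y] [NormedSpace ℝ Y] [CompleteSpace Y],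
    ∀ S : F →L[ℝ] Y, RelWeaklyCompact (S '' Metric.closedBall 0 1) →
      ∀ x : ℕ → F, (Pairwise fun n m => |x n| ⊓ |x m| = 0) → WeaklyNullSeq x →
        Tendsto (fun n => ‖S (x n)‖) atTop (𝓝 0)
/-- If `F` is a Banach lattice with the weak Dunford–Pettis property and `G` is (isometrically,
as a Banach lattice, via `J`) a sublattice of `F` which is the range of a bounded projection
`P : F → F`, then `G` has the weak Dunford–Pettis property. -/
theorem stmt_3 (F G : Type) [NormedAddCommGroup F] [Lattice F] [IsOrderedAddMonoid F]
    [HasSolidNorm F] [NormedSpace ℝ F] [CompleteSpace F]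
    [NormedAddCommGroup G] [Lattice G] [IsOrderedAddMonoid G] [HasSolidNorm G] [NormedSpace ℝ G] [CompleteSpace G]
    (J : G →ₗᵢ[ℝ] F) (hJlat : ∀ x y : G, J (x ⊔ y) = J x ⊔ J y)
    (P : F →L[ℝ] F) (hproj : ∀ x, P (P x) = P x) (hrange : Set.range P = Set.range J)
    (hF : HasWDP F) : HasWDP G := by
  intro Y _ _ _ S hS x hdisj hweak
  -- J preserves inf and abs
  have hJinj : Function.Injective J := J.injective
  have hJinf : ∀ a b : G, J (a ⊓ b) = J a ⊓ J b := by
    intro a b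
    have h1 : a ⊓ b = -(-a ⊔ -b) := by rw [neg_sup, neg_neg, neg_neg]
    rw [h1, map_neg, hJlat, map_neg, map_neg, neg_sup, neg_neg, neg_neg]
  -- build the "inverse" of J on range P
  have hmem : ∀ f : F, ∃ g : G, J g = P f := by
    intro f
    have : P f ∈ Set.range J := by rw [← hrange]; exact ⟨f, rfl⟩
    obtain ⟨g, hg⟩ := this
    exact ⟨g, hg⟩
  choose q hq using hmem
  have qadd : ∀ a b : F, q (a + b) = q a + q b := fun a b =>
    hJinj (by rw [hq, map_add, map_add, hq, hq])
  have qsmul : ∀ (c : ℝ) (a : F), q (c • a) = c • q a := fun c a =>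
    hJinj (by rw [hq, map_smul, map_smul, hq])
  let Qlin : F →ₗ[ℝ] G :=
    { toFun := q, map_add' := qadd, map_smul' := qsmul }
  have qbound : ∀ f : F, ‖Qlin f‖ ≤ ‖P‖ * ‖f‖ := by
    intro f
    have : ‖Qlin f‖ = ‖J (q f)‖ := (J.norm_map (q f)).symm
    rw [this, hq]
    exact P.le_opNorm f
  let Q : F →L[ℝ] G := Qlin.mkContinuous ‖P‖ qbound
  have hQ : ∀ f : F, J (Q f) = P f := hq
  -- Q ∘ J = id
  have hQJ : ∀ g : G, Q (J g) = g := by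
    intro g
    apply hJinj
    rw [hQ]
    have : J g ∈ Set.range P := by rw [hrange]; exact ⟨g, rfl⟩
    obtain ⟨w, hw⟩ := this
    rw [← hw, hproj]
  -- the operator T : F → Y
  let T : F →L[ℝ] Y := S.comp Q
  -- weak compactness of T's image of the unit ball
  set c : ℝ := max ‖P‖ 1 with hc
  have hc1 : (1 : ℝ) ≤ c := le_max_right _ _
  have hc0 : (0 : ℝ) < c := lt_of_lt_of_le one_pos hc1
  have hsub : T '' Metric.closedBall 0 1 ⊆
      (fun y : Y => c • y) '' (S '' Metric.closedBall 0 1) := by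
    rintro _ ⟨f, hf, rfl⟩
    refine ⟨S (c⁻¹ • Q f), ⟨c⁻¹ • Q f, ?_, rfl⟩, ?_⟩
    · rw [Metric.mem_closedBall, dist_zero_right, norm_smul, norm_inv,
        Real.norm_of_nonneg hc0.le]
      rw [Metric.mem_closedBall, dist_zero_right] at hf
      have h1 : ‖Q f‖ ≤ ‖P‖ * ‖f‖ := qbound f
      have h2 : ‖P‖ * ‖f‖ ≤ c := by
        calc ‖P‖ * ‖f‖ ≤ ‖P‖ * 1 := by
              exact mul_le_mul_of_nonneg_left hf (norm_nonneg _)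
          _ ≤ c := by rw [mul_one]; exact le_max_left _ _
      calc c⁻¹ * ‖Q f‖ ≤ c⁻¹ * c := by
            exact mul_le_mul_of_nonneg_left (h1.trans h2) (inv_nonneg.mpr hc0.le)
        _ = 1 := inv_mul_cancel₀ hc0.ne'
    · show c • S (c⁻¹ • Q f) = S (Q f)
      rw [← map_smul, smul_inv_smul₀ hc0.ne']
  have hT : RelWeaklyCompact (T '' Metric.closedBall 0 1) := by
    unfold RelWeaklyCompact
    set M : WeakSpace ℝ Y →L[ℝ] WeakSpace ℝ Y :=
      WeakSpace.map (c • ContinuousLinearMap.id ℝ Y) with hM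
    have hK : IsCompact (M '' closure (toWeakSpace ℝ Y '' (S '' Metric.closedBall 0 1))) :=
      hS.image M.continuous
    have hK' : IsCompact (closure (M '' closure (toWeakSpace ℝ Y '' (S '' Metric.closedBall 0 1)))) :=
      hK.closure
    refine hK'.of_isClosed_subset isClosed_closure (closure_mono ?_)
    intro z hz
    obtain ⟨y, hy, rfl⟩ := hz
    have : toWeakSpace ℝ Y y ∈ M '' (toWeakSpace ℝ Y '' (S '' Metric.closedBall 0 1)) := by
      obtain ⟨w, hw, rfl⟩ := hsub hy
      exact ⟨toWeakSpace ℝ Y w, Set.mem_image_of_mem _ hw, rfl⟩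
    exact (Set.image_mono subset_closure) this
  -- the sequence y = J ∘ x
  have hdisj' : Pairwise fun n m => |J (x n)| ⊓ |J (x m)| = 0 := by
    intro n m hnm
    have habs : ∀ a : G, J |a| = |J a| := by
      intro a
      rw [abs, abs, hJlat, map_neg]
    rw [← habs, ← habs, ← hJinf, hdisj hnm, map_zero]
  have hweak' : WeaklyNullSeq (fun n => J (x n)) := by
    unfold WeaklyNullSeq
    have hinj : Function.Injective ((topDualPairing ℝ F).flip) := by
      have := (separatingDual_iff_injective (R := ℝ) (V := F)).mp inferInstance
      exact this
    refine (WeakBilin.tendsto_iff_forall_eval_tendsto (B := (topDualPairing ℝ F).flip) hinj).mpr ?_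
    intro ψ
    -- ψ : F →L[ℝ] ℝ ; evaluation: (topDualPairing ℝ F).flip z ψ = ψ z
    have hψ : Tendsto (fun n => (ψ.comp J.toContinuousLinearMap) (x n)) atTop (𝓝 0) := by
      have := hweak
      unfold WeaklyNullSeq at this
      have heval : Tendsto (fun n =>
          (topDualPairing ℝ G).flip (toWeakSpace ℝ G (x n)) (ψ.comp J.toContinuousLinearMap))
          atTop (𝓝 ((topDualPairing ℝ G).flip (0 : WeakSpace ℝ G) (ψ.comp J.toContinuousLinearMap))) :=
        ((WeakBilin.eval_continuous _ (ψ.comp J.toContinuousLinearMap)).tendsto _).comp this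
      have e1 : ∀ n, (topDualPairing ℝ G).flip (toWeakSpace ℝ G (x n)) (ψ.comp J.toContinuousLinearMap) = (ψ.comp J.toContinuousLinearMap) (x n) := fun n => rfl
      have e2 : (topDualPairing ℝ G).flip (0 : WeakSpace ℝ G) (ψ.comp J.toContinuousLinearMap) = 0 := (map_zero (ψ.comp J.toContinuousLinearMap) : (ψ.comp J.toContinuousLinearMap) 0 = 0)
      simpa only [e1, e2] using heval
    have e1 : ∀ n, (topDualPairing ℝ F).flip (toWeakSpace ℝ F (J (x n))) ψ = (ψ.comp J.toContinuousLinearMap) (x n) := fun n => rfl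
    have e2 : (topDualPairing ℝ F).flip (0 : WeakSpace ℝ F) ψ = 0 := (map_zero ψ : ψ 0 = 0)
    simpa only [e1, e2] using hψ
  -- apply hF
  have hmain := hF Y T hT (fun n => J (x n)) hdisj' hweak'
  have heq : ∀ n, T (J (x n)) = S (x n) := by
    intro n
    show S (Q (J (x n))) = S (x n)
    rw [hQJ]
  simpa only [heq] using hmain
end
end

section
/- The Banach lattice E = (⊕_{n=1}^∞ ℓ_2^n)_{c_0} does not have the weak Dunford–Pettis* property: there exist a weakly null sequence (x_k) in E and a disjoint weak* null sequence (f_k) in E' with f_k(x_k) = 1 for all k. -/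
open Filter Topology

noncomputable section

/-- The `n`-th block: the Euclidean lattice `ℓ₂^(n+1)` (so `n` ranges over all positive
dimensions). -/
abbrev Blk (n : ℕ) := EuclideanSpace ℝ (Fin (n + 1))

/-- Sequences of blocks; the ambient product in which `E`, `E'` and `E''` live. -/
abbrev PreE := ∀ n, Blk n

/-- The coordinatewise (lattice) order. -/
def ele (x y : PreE) : Prop := ∀ n i, x n i ≤ y n i

/-- Membership in `E = (⊕ ℓ₂ⁿ)_{c₀}`: block norms tend to zero. -/
def memE0 (x : PreE) : Prop := Tendsto (fun n => ‖x n‖) atTop (𝓝 0)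

/-- Membership in `E' = (⊕ ℓ₂ⁿ)_{ℓ₁}`: block norms are summable. -/
def memE1 (x : PreE) : Prop := Summable fun n => ‖x n‖

/-- The duality pairing `⟨f, x⟩ = Σₙ Σᵢ f n i * x n i`. -/
def pairE (f x : PreE) : ℝ := ∑' n, ∑ i, f n i * x n i

/-- `E'' = (⊕ ℓ₂ⁿ)_{ℓ_∞}`, the ℓ∞-sum, as a genuine Banach space. -/
abbrev Epp := ↥(lp Blk ⊤)

/-- The diagonal unit vectors: `dg n` is `1` in the last coordinate of block `n`, `0` elsewhere. -/
def dg (n : ℕ) : PreE := fun m => if m = n then EuclideanSpace.single (Fin.last m) 1 else 0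

lemma pairE_dg_left (k : ℕ) (y : PreE) : pairE (dg k) y = y k (Fin.last k) := by
  unfold pairE
  rw [tsum_eq_single k]
  · simp [dg, EuclideanSpace.single_apply]
  · intro n hn
    simp [dg, hn]

lemma pairE_dg_right (k : ℕ) (g : PreE) : pairE g (dg k) = g k (Fin.last k) := by
  unfold pairE
  rw [tsum_eq_single k]
  · simp [dg, EuclideanSpace.single_apply]
  · intro n hn
    simp [dg, hn]

lemma abs_apply_le (z : PreE) (k : ℕ) : |z k (Fin.last k)| ≤ ‖z k‖ := by
  have := EuclideanSpace.norm_eq (z k)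
  calc |z k (Fin.last k)| = Real.sqrt (z k (Fin.last k) ^ 2) := by
        rw [Real.sqrt_sq_eq_abs]
    _ ≤ ‖z k‖ := by
        rw [this]
        apply Real.sqrt_le_sqrt
        have : z k (Fin.last k) ^ 2 ≤ ∑ i, z k i ^ 2 :=
          Finset.single_le_sum (f := fun i => z k i ^ 2) (fun i _ => sq_nonneg _) (Finset.mem_univ _)
        simpa [Real.norm_eq_abs, sq_abs] using this

lemma norm_dg (k n : ℕ) : ‖dg k n‖ = if n = k then 1 else 0 := by
  by_cases h : n = k <;> simp [dg, h, EuclideanSpace.norm_single]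

lemma memE0_dg (k : ℕ) : memE0 (dg k) := by
  apply tendsto_nhds_of_eventually_eq
  filter_upwards [eventually_gt_atTop k] with n hn
  rw [norm_dg]
  simp [Nat.ne_of_gt hn]

lemma memE1_dg (k : ℕ) : memE1 (dg k) := by
  apply summable_of_ne_finset_zero (s := {k})
  intro n hn
  rw [norm_dg]
  simp_all

lemma tendsto_pair (z : PreE) (hz : Tendsto (fun n => ‖z n‖) atTop (𝓝 0)) :
    Tendsto (fun k => z k (Fin.last k)) atTop (𝓝 0) := by
  refine squeeze_zero_norm (fun k => ?_) hz
  simpa [Real.norm_eq_abs] using abs_apply_le z k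


/-- `E = (⊕ ℓ₂ⁿ)_{c₀}` fails the weak DP* property: there are a weakly null sequence
`(x k)` in `E` and a disjoint weak* null sequence `(f k)` in `E' = (⊕ ℓ₂ⁿ)_{ℓ₁}` with
`f k (x k) = 1` for all `k`. -/
theorem stmt_4 :
    ∃ x f : ℕ → PreE,
      (∀ k, memE0 (x k)) ∧ (∀ k, memE1 (f k)) ∧
      (∀ g : PreE, memE1 g → Tendsto (fun k => pairE g (x k)) atTop (𝓝 0)) ∧
      (Pairwise fun k j => ∀ n i, min |f k n i| |f j n i| = 0) ∧
      (∀ y : PreE, memE0 y → Tendsto (fun k => pairE (f k) y) atTop (𝓝 0)) ∧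
      (∀ k, pairE (f k) (x k) = 1) := by
  refine ⟨dg, dg, memE0_dg, memE1_dg, ?_, ?_, ?_, ?_⟩
  · intro g hg
    have h0 : Tendsto (fun n => ‖g n‖) atTop (𝓝 0) := hg.tendsto_atTop_zero
    simpa [pairE_dg_right] using tendsto_pair g h0
  · intro k j hkj n i
    by_cases h : n = k
    · subst h
      have : n ≠ j := fun h => hkj (h ▸ rfl)
      simp [dg, this, min_eq_right, abs_nonneg]
    · simp [dg, h, min_eq_left, abs_nonneg]
  · intro y hy
    simpa [pairE_dg_left] using tendsto_pair y hy
  · intro k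
    rw [pairE_dg_left]
    simp [dg, EuclideanSpace.single_apply]
end
end

section
/- The bidual E'' = (⊕_{n=1}^∞ ℓ_2^n)_{ℓ_∞} does not have the weak Dunford–Pettis property. -/
open Filter Topology

noncomputable section

/-- The weak Dunford–Pettis property of a normed lattice `F` whose disjointness relation is
`disj`: weakly compact operators map disjoint weakly null sequences to norm null sequences. -/
def HasWDPw (F : Type) [NormedAddCommGroup F] [NormedSpace ℝ F] (disj : F → F → Prop) : Prop :=
  ∀ (Y : Type) [NormedAddCommGroup Y] [NormedSpace ℝ Y] [CompleteSpace Y],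
    ∀ S : F →L[ℝ] Y, RelWeaklyCompact (S '' Metric.closedBall 0 1) →
      ∀ x : ℕ → F, (Pairwise fun n m => disj (x n) (x m)) → WeaklyNullSeq x →
        Tendsto (fun n => ‖S (x n)‖) atTop (𝓝 0)

/- ### Auxiliary development for `stmt_5` -/

section Aux

open Metric Finset
open scoped ENNReal NNReal

/-- A fixed ultrafilter extending `atTop` on `ℕ`. -/
def UF : Ultrafilter ℕ := Ultrafilter.of atTop

lemma UF_le : (UF : Filter ℕ) ≤ atTop := Ultrafilter.of_le _

/-- Coordinate extraction from a sequence of blocks. -/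
def co (x : PreE) (i n : ℕ) : ℝ := if h : i < n + 1 then x n ⟨i, h⟩ else 0

lemma blk_sum_sq {n : ℕ} (y : Blk n) : ∑ j, y j ^ 2 = ‖y‖ ^ 2 := by
  rw [EuclideanSpace.norm_eq, Real.sq_sqrt (by positivity)]
  simp [sq_abs]

lemma blk_coord_le {n : ℕ} (y : Blk n) (j : Fin (n + 1)) : |y j| ≤ ‖y‖ := by
  have h1 : y j ^ 2 ≤ ‖y‖ ^ 2 := by
    rw [← blk_sum_sq y]
    exact Finset.single_le_sum (f := fun j => y j ^ 2) (fun i _ => sq_nonneg _) (Finset.mem_univ j)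
  calc |y j| = Real.sqrt (y j ^ 2) := (Real.sqrt_sq_eq_abs _).symm
    _ ≤ Real.sqrt (‖y‖ ^ 2) := Real.sqrt_le_sqrt h1
    _ = ‖y‖ := Real.sqrt_sq (norm_nonneg _)

lemma co_le (x : Epp) (i n : ℕ) : |co (x : PreE) i n| ≤ ‖x‖ := by
  unfold co
  split
  · exact (blk_coord_le _ _).trans (lp.norm_apply_le_norm ENNReal.top_ne_zero x n)
  · simpa using norm_nonneg x

lemma exists_ulim {t : ℕ → ℝ} {C : ℝ} (h : ∀ n, |t n| ≤ C) :
    ∃ a, Tendsto t (UF : Filter ℕ) (𝓝 a) := by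
  have hmem : Set.Icc (-C) C ∈ Ultrafilter.map t UF := by
    rw [Ultrafilter.mem_map]
    exact Filter.univ_mem' fun n => abs_le.1 (h n)
  obtain ⟨a, -, ha⟩ := (isCompact_Icc (a := -C) (b := C)).ultrafilter_le_nhds
    (Ultrafilter.map t UF) (le_principal_iff.2 hmem)
  exact ⟨a, by rwa [Ultrafilter.coe_map] at ha⟩

/-- The limit of a bounded real sequence along the ultrafilter `UF`. -/
def ulim (t : ℕ → ℝ) : ℝ := limUnder (UF : Filter ℕ) t

lemma ulim_spec {t : ℕ → ℝ} {C : ℝ} (h : ∀ n, |t n| ≤ C) :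
    Tendsto t (UF : Filter ℕ) (𝓝 (ulim t)) := tendsto_nhds_limUnder (exists_ulim h)

lemma ulim_eq {t : ℕ → ℝ} {a : ℝ} (h : Tendsto t (UF : Filter ℕ) (𝓝 a)) : ulim t = a :=
  h.limUnder_eq

/-- `ℓ²`, the target Hilbert space. -/
abbrev Hs : Type := lp (fun _ : ℕ => ℝ) 2

/-- The underlying function of the "projection" operator. -/
def P0 (x : Epp) : ℕ → ℝ := fun i => ulim (co (x : PreE) i)

lemma P0_tendsto (x : Epp) (i : ℕ) :
    Tendsto (co (x : PreE) i) (UF : Filter ℕ) (𝓝 (P0 x i)) :=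
  ulim_spec (co_le x i)

lemma sum_sq_co_le (x : Epp) (s : Finset ℕ) (n : ℕ) :
    ∑ i ∈ s, co (x : PreE) i n ^ 2 ≤ ‖x‖ ^ 2 := by
  have h0 : ∑ i ∈ s, co (x : PreE) i n ^ 2
      = ∑ i ∈ s ∩ Finset.range (n + 1), co (x : PreE) i n ^ 2 := by
    refine (Finset.sum_subset Finset.inter_subset_left fun i hi hni => ?_).symm
    have : ¬ i < n + 1 := by
      intro hlt
      exact hni (Finset.mem_inter.2 ⟨hi, Finset.mem_range.2 hlt⟩)
    simp [co, this]
  have h1 : ∑ i ∈ s ∩ Finset.range (n + 1), co (x : PreE) i n ^ 2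
      ≤ ∑ i ∈ Finset.range (n + 1), co (x : PreE) i n ^ 2 :=
    Finset.sum_le_sum_of_subset_of_nonneg Finset.inter_subset_right fun _ _ _ => sq_nonneg _
  have h2 : ∑ i ∈ Finset.range (n + 1), co (x : PreE) i n ^ 2
      = ∑ j : Fin (n + 1), ((x : PreE) n j) ^ 2 := by
    rw [← Fin.sum_univ_eq_sum_range (fun i => co (x : PreE) i n ^ 2) (n + 1)]
    refine Finset.sum_congr rfl fun j _ => ?_
    simp [co, j.isLt]
  have h3 : ∑ j : Fin (n + 1), ((x : PreE) n j) ^ 2 = ‖(x : PreE) n‖ ^ 2 := blk_sum_sq _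
  have h4 : ‖(x : PreE) n‖ ≤ ‖x‖ := lp.norm_apply_le_norm ENNReal.top_ne_zero x n
  calc ∑ i ∈ s, co (x : PreE) i n ^ 2
      = ∑ i ∈ s ∩ Finset.range (n + 1), co (x : PreE) i n ^ 2 := h0
    _ ≤ ∑ i ∈ Finset.range (n + 1), co (x : PreE) i n ^ 2 := h1
    _ = ‖(x : PreE) n‖ ^ 2 := by rw [h2, h3]
    _ ≤ ‖x‖ ^ 2 := by
        exact pow_le_pow_left₀ (norm_nonneg _) h4 2

lemma P0_sum_sq_le (x : Epp) (s : Finset ℕ) : ∑ i ∈ s, P0 x i ^ 2 ≤ ‖x‖ ^ 2 := by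
  have ht : Tendsto (fun n => ∑ i ∈ s, co (x : PreE) i n ^ 2) (UF : Filter ℕ)
      (𝓝 (∑ i ∈ s, P0 x i ^ 2)) :=
    tendsto_finset_sum _ fun i _ => (P0_tendsto x i).pow 2
  exact le_of_tendsto ht (Eventually.of_forall fun n => sum_sq_co_le x s n)

lemma rpow_two_toReal (a : ℝ) : ‖a‖ ^ (2 : ℝ≥0∞).toReal = a ^ 2 := by
  have h : ((2 : ℝ≥0∞)).toReal = ((2 : ℕ) : ℝ) := by simp
  rw [h, Real.rpow_natCast, Real.norm_eq_abs, sq_abs]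

lemma P0_mem (x : Epp) : Memℓp (P0 x) 2 := by
  apply memℓp_gen' (C := ‖x‖ ^ 2)
  intro s
  calc ∑ i ∈ s, ‖P0 x i‖ ^ (2 : ℝ≥0∞).toReal = ∑ i ∈ s, P0 x i ^ 2 := by
        exact Finset.sum_congr rfl fun i _ => rpow_two_toReal _
    _ ≤ ‖x‖ ^ 2 := P0_sum_sq_le x s

lemma co_add (x y : Epp) (i n : ℕ) :
    co ((x + y : Epp) : PreE) i n = co (x : PreE) i n + co (y : PreE) i n := by
  unfold co
  split
  · rfl
  · simp

lemma co_smul (c : ℝ) (x : Epp) (i n : ℕ) :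
    co ((c • x : Epp) : PreE) i n = c * co (x : PreE) i n := by
  unfold co
  split
  · rfl
  · simp

/-- The linear "limit projection". -/
def Pl : Epp →ₗ[ℝ] Hs where
  toFun x := ⟨P0 x, P0_mem x⟩
  map_add' x y := by
    apply Subtype.ext
    funext i
    have h1 : Tendsto (co ((x + y : Epp) : PreE) i) (UF : Filter ℕ)
        (𝓝 (P0 x i + P0 y i)) := by
      have := (P0_tendsto x i).add (P0_tendsto y i)
      refine this.congr fun n => ?_
      rw [co_add]
    exact ulim_eq h1
  map_smul' c x := by
    apply Subtype.ext
    funext i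
    have h1 : Tendsto (co ((c • x : Epp) : PreE) i) (UF : Filter ℕ)
        (𝓝 (c * P0 x i)) := by
      have := (P0_tendsto x i).const_mul c
      refine this.congr fun n => ?_
      rw [co_smul]
    exact ulim_eq h1

/-- The bounded "limit projection" operator `E'' → ℓ²`. -/
def Pop : Epp →L[ℝ] Hs :=
  Pl.mkContinuous 1 (by
    intro x
    rw [one_mul]
    apply lp.norm_le_of_forall_sum_le (by norm_num : 0 < (2 : ℝ≥0∞).toReal) (norm_nonneg x)
    intro s
    calc ∑ i ∈ s, ‖(Pl x : ℕ → ℝ) i‖ ^ (2 : ℝ≥0∞).toReal = ∑ i ∈ s, P0 x i ^ 2 := by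
          exact Finset.sum_congr rfl fun i _ => rpow_two_toReal _
      _ ≤ ‖x‖ ^ 2 := P0_sum_sq_le x s
      _ = ‖x‖ ^ (2 : ℝ≥0∞).toReal := by
          rw [show ((2 : ℝ≥0∞)).toReal = ((2 : ℕ) : ℝ) by simp, Real.rpow_natCast])

/-- The `k`-th column vector: `1` in coordinate `k` of every block that has it. -/
def jv (k : ℕ) : PreE := fun n => if h : k < n + 1 then EuclideanSpace.single ⟨k, h⟩ 1 else 0

lemma jv_apply (k n : ℕ) (j : Fin (n + 1)) : jv k n j = if (j : ℕ) = k then 1 else 0 := by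
  unfold jv
  by_cases h : k < n + 1
  · rw [dif_pos h, EuclideanSpace.single_apply]
    congr 1
    simp [Fin.ext_iff]
  · rw [dif_neg h]
    have hj : (j : ℕ) ≠ k := by
      have := j.isLt
      omega
    simp [hj]

lemma jv_norm_le (k n : ℕ) : ‖jv k n‖ ≤ 1 := by
  unfold jv
  split
  · rw [EuclideanSpace.norm_single]
    simp
  · simp

/-- The column vectors as elements of `E''`. -/
def jvE (k : ℕ) : Epp :=
  ⟨jv k, memℓp_infty ⟨1, by rintro - ⟨n, rfl⟩; exact jv_norm_le k n⟩⟩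

lemma jvE_coe (k : ℕ) : ((jvE k : Epp) : PreE) = jv k := rfl

lemma norm_comb_le (c : ℕ → ℝ) (s : Finset ℕ) :
    ‖∑ k ∈ s, c k • jvE k‖ ≤ Real.sqrt (∑ k ∈ s, c k ^ 2) := by
  apply lp.norm_le_of_forall_le (Real.sqrt_nonneg _)
  intro n
  have hcoe : (((∑ k ∈ s, c k • jvE k : Epp)) : PreE) n = ∑ k ∈ s, c k • jv k n := by
    have h1 : (((∑ k ∈ s, c k • jvE k : Epp)) : PreE) = ∑ k ∈ s, (fun m => c k • jv k m) := by
      rw [lp.coeFn_sum]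
      refine Finset.sum_congr rfl fun k _ => ?_
      rw [lp.coeFn_smul]
      rfl
    rw [h1]
    simp
  rw [hcoe, Real.le_sqrt (norm_nonneg _) (Finset.sum_nonneg fun _ _ => sq_nonneg _)]
  rw [← blk_sum_sq]
  have hval : ∀ j : Fin (n + 1), (∑ k ∈ s, c k • jv k n) j = if (j : ℕ) ∈ s then c j else 0 := by
    intro j
    have happ : (∑ k ∈ s, c k • jv k n) j = ∑ k ∈ s, c k * jv k n j := by
      rw [WithLp.ofLp_sum, Finset.sum_apply]
      rfl
    rw [happ]
    simp_rw [jv_apply, mul_ite, mul_one, mul_zero]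
    exact Finset.sum_ite_eq s ((j : ℕ)) c
  calc ∑ j : Fin (n + 1), ((∑ k ∈ s, c k • jv k n) j) ^ 2
      = ∑ j : Fin (n + 1), (if ((j : ℕ)) ∈ s then c j else 0) ^ 2 := by
        exact Finset.sum_congr rfl fun j _ => by rw [hval]
    _ = ∑ i ∈ Finset.range (n + 1), (if i ∈ s then c i else 0) ^ 2 :=
        Fin.sum_univ_eq_sum_range (fun i => (if i ∈ s then c i else 0) ^ 2) (n + 1)
    _ = ∑ i ∈ Finset.range (n + 1), (if i ∈ s then c i ^ 2 else 0) := by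
        refine Finset.sum_congr rfl fun i _ => ?_
        split <;> simp
    _ = ∑ i ∈ Finset.range (n + 1) ∩ s, c i ^ 2 := Finset.sum_ite_mem _ _ _
    _ ≤ ∑ i ∈ s, c i ^ 2 :=
        Finset.sum_le_sum_of_subset_of_nonneg Finset.inter_subset_right
          fun _ _ _ => sq_nonneg _

lemma dual_sq_sum (φ : Epp →L[ℝ] ℝ) (s : Finset ℕ) :
    ∑ k ∈ s, φ (jvE k) ^ 2 ≤ ‖φ‖ ^ 2 := by
  set c : ℕ → ℝ := fun k => φ (jvE k) with hc
  set T := ∑ k ∈ s, c k ^ 2 with hT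
  have hT0 : (0 : ℝ) ≤ T := Finset.sum_nonneg fun _ _ => sq_nonneg _
  have hval : φ (∑ k ∈ s, c k • jvE k) = T := by
    rw [map_sum]
    refine Finset.sum_congr rfl fun k _ => ?_
    rw [map_smul, smul_eq_mul]
    exact (sq (c k)).symm
  have h1 : T ≤ ‖φ‖ * Real.sqrt T := by
    calc T = φ (∑ k ∈ s, c k • jvE k) := hval.symm
      _ ≤ |φ (∑ k ∈ s, c k • jvE k)| := le_abs_self _
      _ ≤ ‖φ‖ * ‖∑ k ∈ s, c k • jvE k‖ := φ.le_opNorm _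
      _ ≤ ‖φ‖ * Real.sqrt T := by
          exact mul_le_mul_of_nonneg_left (norm_comb_le c s) (norm_nonneg φ)
  rcases eq_or_lt_of_le hT0 with h | h
  · rw [← h]
    positivity
  · have h2 : Real.sqrt T ≤ ‖φ‖ := by
      have h3 : Real.sqrt T * Real.sqrt T ≤ ‖φ‖ * Real.sqrt T := by
        rwa [Real.mul_self_sqrt hT0]
      exact le_of_mul_le_mul_right h3 (Real.sqrt_pos.2 h)
    calc T = Real.sqrt T ^ 2 := (Real.sq_sqrt hT0).symm
      _ ≤ ‖φ‖ ^ 2 := pow_le_pow_left₀ (Real.sqrt_nonneg _) h2 2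

lemma jvE_disjoint : Pairwise fun k m =>
    ∀ n i, min |((jvE k : Epp) : PreE) n i| |((jvE m : Epp) : PreE) n i| = 0 := by
  intro k m hkm n i
  rw [jvE_coe, jvE_coe, jv_apply, jv_apply]
  by_cases h1 : (i : ℕ) = k
  · have h2 : (i : ℕ) ≠ m := by rw [h1]; exact hkm
    simp [h1, h2, hkm]
  · simp [h1]

lemma flip_pairing_inj : Function.Injective ⇑((topDualPairing ℝ Epp).flip) := by
  intro a b hab
  rw [NormedSpace.eq_iff_forall_dual_eq ℝ]
  intro g
  exact DFunLike.congr_fun hab g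

lemma jvE_weaklyNull : WeaklyNullSeq jvE := by
  unfold WeaklyNullSeq
  have h0 : (0 : WeakSpace ℝ Epp) = toWeakSpace ℝ Epp 0 := (map_zero _).symm
  rw [h0]
  refine (WeakBilin.tendsto_iff_forall_eval_tendsto (B := (topDualPairing ℝ Epp).flip) flip_pairing_inj).2 ?_
  intro φ
  have heq : ∀ k, ((topDualPairing ℝ Epp).flip) (toWeakSpace ℝ Epp (jvE k)) φ = φ (jvE k) :=
    fun k => rfl
  have hzero : ((topDualPairing ℝ Epp).flip) (toWeakSpace ℝ Epp 0) φ = 0 := by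
    show φ (0 : Epp) = 0
    exact map_zero φ
  rw [hzero]
  simp_rw [heq]
  have hsum : Summable fun k => φ (jvE k) ^ 2 :=
    summable_of_sum_le (fun _ => sq_nonneg _) (fun s => dual_sq_sum φ s)
  have h2 : Tendsto (fun k => φ (jvE k) ^ 2) atTop (𝓝 0) := hsum.tendsto_atTop_zero
  have h3 : Tendsto (fun k => |φ (jvE k)|) atTop (𝓝 0) := by
    have := (Real.continuous_sqrt.tendsto' 0 0 Real.sqrt_zero).comp h2
    simpa [Function.comp_def, Real.sqrt_sq_eq_abs] using this
  exact squeeze_zero_norm (fun k => le_of_eq (Real.norm_eq_abs _)) h3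

lemma P0_jvE (k : ℕ) : P0 (jvE k) k = 1 := by
  apply ulim_eq
  apply Tendsto.mono_left _ UF_le
  have hev : ∀ᶠ n in atTop, co ((jvE k : Epp) : PreE) k n = 1 := by
    rw [eventually_atTop]
    refine ⟨k, fun n hn => ?_⟩
    have hk : k < n + 1 := by omega
    rw [jvE_coe]
    unfold co
    rw [dif_pos hk, jv_apply]
    simp
  exact Tendsto.congr' (hev.mono fun n hn => hn.symm) tendsto_const_nhds

lemma relWeaklyCompact_of_bounded {H : Type} [NormedAddCommGroup H] [InnerProductSpace ℝ H]
    [CompleteSpace H] {A : Set H} {r : ℝ} (hA : ∀ a ∈ A, ‖a‖ ≤ r) : RelWeaklyCompact A := by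
  set td := InnerProductSpace.toDual ℝ H with htd
  set g : WeakSpace ℝ H → WeakDual ℝ H := fun x => td x with hg
  set g' : WeakDual ℝ H → WeakSpace ℝ H := fun φ => td.symm φ with hg'
  have hgc : Continuous g := by
    apply WeakBilin.continuous_of_continuous_eval
    intro y
    have hfun : (fun x : WeakSpace ℝ H => (topDualPairing ℝ H) (g x) y) = fun x => (td y) x := by
      funext x
      show td x y = td y x
      change @inner ℝ H _ x y = @inner ℝ H _ y x
      exact real_inner_comm _ _
    rw [hfun]
    exact WeakBilin.eval_continuous ((topDualPairing ℝ H).flip) (td y)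
  have hg'c : Continuous g' := by
    apply WeakBilin.continuous_of_continuous_eval
    intro f
    have hfun : (fun φ : WeakDual ℝ H => ((topDualPairing ℝ H).flip) (g' φ) f)
        = fun φ : WeakDual ℝ H => (topDualPairing ℝ H) φ (td.symm f) := by
      funext φ
      show f (td.symm φ) = φ (td.symm f)
      conv_lhs => rw [← td.apply_symm_apply f]
      conv_rhs => rw [← td.apply_symm_apply φ]
      change inner ℝ (td.symm f) (td.symm φ) = inner ℝ (td.symm φ) (td.symm f)
      exact real_inner_comm _ _
    rw [hfun]
    exact WeakBilin.eval_continuous (topDualPairing ℝ H) (td.symm f)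
  set B : Set (WeakDual ℝ H) := WeakDual.toStrongDual ⁻¹' Metric.closedBall (0 : StrongDual ℝ H) r with hB
  have hBc : IsCompact B := by
    rw [hB]
    exact WeakDual.isCompact_closedBall (0 : StrongDual ℝ H) r
  have hBcl : IsClosed B := by
    rw [hB]
    exact WeakDual.isClosed_closedBall (0 : StrongDual ℝ H) r
  have hKc : IsCompact (g ⁻¹' B) := by
    have himg : g' '' B = g ⁻¹' B := by
      ext x
      constructor
      · rintro ⟨φ, hφ, rfl⟩
        show g (g' φ) ∈ B
        have : g (g' φ) = φ := td.apply_symm_apply φ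
        rw [this]
        exact hφ
      · intro hx
        exact ⟨g x, hx, td.symm_apply_apply x⟩
    rw [← himg]
    exact hBc.image hg'c
  have hKcl : IsClosed (g ⁻¹' B) := hBcl.preimage hgc
  apply IsCompact.of_isClosed_subset hKc isClosed_closure
  apply closure_minimal _ hKcl
  rintro - ⟨a, ha, rfl⟩
  show g (toWeakSpace ℝ H a) ∈ B
  show WeakDual.toStrongDual (td a) ∈ Metric.closedBall 0 r
  rw [Metric.mem_closedBall, dist_zero_right]
  calc ‖WeakDual.toStrongDual (td a)‖ = ‖a‖ := td.norm_map a
    _ ≤ r := hA a ha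

end Aux

/-- The bidual `E'' = (⊕ ℓ₂ⁿ)_{ℓ∞}` (with its coordinatewise lattice disjointness) does not
have the weak Dunford–Pettis property. -/
theorem stmt_5 :
    ¬ HasWDPw Epp (fun a b => ∀ n i, min |(a : PreE) n i| |(b : PreE) n i| = 0) := by
  intro h
  have hwc : RelWeaklyCompact (Pop '' Metric.closedBall 0 1) := by
    apply relWeaklyCompact_of_bounded (r := ‖Pop‖)
    rintro - ⟨x, hx, rfl⟩
    calc ‖Pop x‖ ≤ ‖Pop‖ * ‖x‖ := Pop.le_opNorm x
      _ ≤ ‖Pop‖ * 1 := by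
          exact mul_le_mul_of_nonneg_left (mem_closedBall_zero_iff.1 hx) (norm_nonneg _)
      _ = ‖Pop‖ := mul_one _
  have hP := h Hs Pop hwc jvE jvE_disjoint jvE_weaklyNull
  have hge : ∀ k, (1 : ℝ) ≤ ‖Pop (jvE k)‖ := by
    intro k
    have h1 : ‖(Pop (jvE k) : ℕ → ℝ) k‖ ≤ ‖Pop (jvE k)‖ :=
      lp.norm_apply_le_norm (by norm_num) (Pop (jvE k)) k
    have h2 : (Pop (jvE k) : ℕ → ℝ) k = 1 := P0_jvE k
    rw [h2] at h1
    simpa using h1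
  have hle : (1 : ℝ) ≤ 0 := ge_of_tendsto hP (Eventually.of_forall hge)
  linarith
end
end

section
/- The Banach lattice E = (⊕_{n=1}^∞ ℓ_2^n)_{c_0} does not have the positive Grothendieck property: the sequence of coordinate functionals (e'_{n,n}) in E' is positive and weak* null but not weakly null. -/
open Filter Topology

noncomputable section

lemma dg_apply_ne (k n : ℕ) (h : n ≠ k) : dg k n = 0 := by simp [dg, h]

lemma dg_self (k : ℕ) : dg k k = EuclideanSpace.single (Fin.last k) 1 := by simp [dg]

lemma pair_dg_left (x : PreE) (k : ℕ) : pairE (dg k) x = x k (Fin.last k) := by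
  unfold pairE
  rw [tsum_eq_single k]
  · rw [dg_self]
    simp [EuclideanSpace.single_apply]
  · intro n hn
    rw [dg_apply_ne k n hn]
    simp

lemma pair_dg_right (F : PreE) (k : ℕ) : pairE F (dg k) = F k (Fin.last k) := by
  unfold pairE
  rw [tsum_eq_single k]
  · rw [dg_self]
    simp [EuclideanSpace.single_apply]
  · intro n hn
    rw [dg_apply_ne k n hn]
    simp

/-- `E = (⊕ ℓ₂ⁿ)_{c₀}` fails the positive Grothendieck property: the diagonal coordinate
functionals `(dg k)` in `E'` are positive and weak* null (i.e. null against every `x ∈ E`)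
but not weakly null (i.e. not null against every element of `E'' = (⊕ ℓ₂ⁿ)_{ℓ∞}`). -/
theorem stmt_7 :
    (∀ k, ele 0 (dg k)) ∧ (∀ k, memE1 (dg k)) ∧
    (∀ x : PreE, memE0 x → Tendsto (fun k => pairE (dg k) x) atTop (𝓝 0)) ∧
    ¬ (∀ F : PreE, (∃ C, ∀ n, ‖F n‖ ≤ C) →
        Tendsto (fun k => pairE F (dg k)) atTop (𝓝 0)) := by
  refine ⟨?_, ?_, ?_, ?_⟩
  · intro k n i
    simp only [Pi.zero_apply]
    rcases eq_or_ne n k with h | h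
    · subst h; rw [dg_self, EuclideanSpace.single_apply]
      by_cases hi : i = Fin.last n <;> simp [hi]
    · rw [dg_apply_ne k n h]
  · intro k
    apply summable_of_finite_support
    apply Set.Finite.subset (Set.finite_singleton k)
    intro n hn
    simp only [Function.mem_support] at hn
    by_contra h
    exact hn (by rw [dg_apply_ne k n h]; simp)
  · intro x hx
    have h1 : Tendsto (fun k => ‖x k‖) atTop (𝓝 0) := hx
    rw [show (fun k => pairE (dg k) x) = fun k => x k (Fin.last k) from
      funext fun k => pair_dg_left x k]
    refine squeeze_zero_norm (fun k => ?_) h1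
    have h2 := norm_inner_le_norm (𝕜 := ℝ) (EuclideanSpace.single (Fin.last k) (1:ℝ)) (x k)
    rw [EuclideanSpace.inner_single_left, EuclideanSpace.norm_single] at h2
    simpa using h2
  · intro h
    have := h (fun n => EuclideanSpace.single (Fin.last n) 1) ⟨1, fun n => by
      simp [EuclideanSpace.norm_single]⟩
    rw [show (fun k => pairE (fun n => EuclideanSpace.single (Fin.last n) 1) (dg k))
        = fun _ => (1:ℝ) from funext fun k => by
          rw [pair_dg_right]; simp [EuclideanSpace.single_apply]] at this
    have := tendsto_nhds_unique this tendsto_const_nhds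
    norm_num at this
end
end

section
/- The Banach lattice E' = (⊕_{n=1}^∞ ℓ_2^n)_{ℓ_1} has the weak Grothendieck property: every disjoint weak* null sequence in E'' is weakly null. -/
open Filter Topology

noncomputable section

/-! ### Auxiliary lemmas -/

open scoped RealInnerProductSpace

lemma sum_mul_eq_inner {n : ℕ} (a b : Blk n) : ∑ i, a i * b i = ⟪a, b⟫ := by
  rw [PiLp.inner_apply]
  simp [RCLike.inner_apply, conj_trivial]
  exact Finset.sum_congr rfl fun i _ => mul_comm _ _

lemma lp_one_summable (g : lp Blk 1) : Summable fun n => ‖(g : PreE) n‖ := by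
  have h := lp.memℓp g
  rw [memℓp_gen_iff (by norm_num)] at h
  simpa using h

lemma lp_one_norm (g : lp Blk 1) : ‖g‖ = ∑' n, ‖(g : PreE) n‖ := by
  rw [lp.norm_eq_tsum_rpow (by norm_num)]
  simp

lemma blk_norm_le (x : Epp) (n : ℕ) : ‖(x : PreE) n‖ ≤ ‖x‖ :=
  lp.norm_apply_le_norm ENNReal.top_ne_zero x n

lemma pair_term_bound (g : PreE) (x : Epp) (n : ℕ) :
    ‖∑ i, g n i * (x : PreE) n i‖ ≤ ‖g n‖ * ‖x‖ := by
  rw [sum_mul_eq_inner, Real.norm_eq_abs]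
  calc |⟪g n, (x : PreE) n⟫| ≤ ‖g n‖ * ‖(x : PreE) n‖ := abs_real_inner_le_norm _ _
    _ ≤ ‖g n‖ * ‖x‖ := mul_le_mul_of_nonneg_left (blk_norm_le x n) (norm_nonneg _)

lemma summable_pair (g : PreE) (hg : Summable fun n => ‖g n‖) (x : Epp) :
    Summable fun n => ∑ i, g n i * (x : PreE) n i := by
  apply Summable.of_norm
  exact Summable.of_nonneg_of_le (fun n => norm_nonneg _) (fun n => pair_term_bound g x n)
    (hg.mul_right ‖x‖)

lemma pair_abs_le (g : PreE) (hg : Summable fun n => ‖g n‖) (x : Epp) :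
    |pairE g x| ≤ (∑' n, ‖g n‖) * ‖x‖ := by
  unfold pairE
  rw [← Real.norm_eq_abs]
  calc ‖∑' n, ∑ i, g n i * (x : PreE) n i‖ ≤ ∑' n, ‖∑ i, g n i * (x : PreE) n i‖ :=
        norm_tsum_le_tsum_norm (Summable.of_nonneg_of_le (fun n => norm_nonneg _)
          (fun n => pair_term_bound g x n) (hg.mul_right ‖x‖))
    _ ≤ ∑' n, ‖g n‖ * ‖x‖ :=
        Summable.tsum_le_tsum (fun n => pair_term_bound g x n)
          (Summable.of_nonneg_of_le (fun n => norm_nonneg _)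
            (fun n => pair_term_bound g x n) (hg.mul_right ‖x‖))
          (hg.mul_right ‖x‖)
    _ = (∑' n, ‖g n‖) * ‖x‖ := tsum_mul_right

lemma pairE_add (g h : lp Blk 1) (x : Epp) :
    pairE ((g + h : lp Blk 1) : PreE) x = pairE (g : PreE) x + pairE (h : PreE) x := by
  unfold pairE
  rw [← Summable.tsum_add (summable_pair _ (lp_one_summable g) x) (summable_pair _ (lp_one_summable h) x)]
  congr 1
  funext n
  rw [← Finset.sum_add_distrib]
  apply Finset.sum_congr rfl
  intro i _
  have : ((g + h : lp Blk 1) : PreE) n i = g n i + h n i := by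
    rw [lp.coeFn_add]; rfl
  rw [this, add_mul]

lemma pairE_smul (c : ℝ) (g : lp Blk 1) (x : Epp) :
    pairE ((c • g : lp Blk 1) : PreE) x = c * pairE (g : PreE) x := by
  unfold pairE
  rw [← tsum_mul_left]
  congr 1
  funext n
  rw [Finset.mul_sum]
  apply Finset.sum_congr rfl
  intro i _
  have : ((c • g : lp Blk 1) : PreE) n i = c * g n i := by
    rw [lp.coeFn_smul]; rfl
  rw [this, mul_assoc]

/-- The functional on `ℓ¹` induced by an element of `E''`. -/
def pairCLM (x : Epp) : lp Blk 1 →L[ℝ] ℝ :=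
  LinearMap.mkContinuous
    { toFun := fun g => pairE (g : PreE) x
      map_add' := fun g h => pairE_add g h x
      map_smul' := fun c g => pairE_smul c g x }
    ‖x‖
    (by
      intro g
      simp only [LinearMap.coe_mk, AddHom.coe_mk]
      rw [lp_one_norm, Real.norm_eq_abs]
      calc |pairE (g : PreE) x| ≤ (∑' n, ‖(g : PreE) n‖) * ‖x‖ :=
            pair_abs_le _ (lp_one_summable g) x
        _ = ‖x‖ * ∑' n, ‖(g : PreE) n‖ := mul_comm _ _)

lemma pairCLM_apply (x : Epp) (g : lp Blk 1) : pairCLM x g = pairE (g : PreE) x := rfl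

lemma mul_eq_zero_of_min_abs {x y : ℝ} (h : min |x| |y| = 0) : x * y = 0 := by
  rcases le_total |x| |y| with h' | h'
  · rw [min_eq_left h', abs_eq_zero] at h
    simp [h]
  · rw [min_eq_right h', abs_eq_zero] at h
    simp [h]

set_option maxHeartbeats 1000000 in
/-- `E' = (⊕ ℓ₂ⁿ)_{ℓ₁}` has the weak Grothendieck property: every disjoint sequence in
`E'' = (⊕ ℓ₂ⁿ)_{ℓ∞}` which is weak* null (i.e. null against every `g ∈ E'`) is weakly
null in `E''`. -/
theorem stmt_8 (F : ℕ → Epp)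
    (hdisj : Pairwise fun k j => ∀ n i, min |(F k : PreE) n i| |(F j : PreE) n i| = 0)
    (hwstar : ∀ g : PreE, memE1 g → Tendsto (fun k => pairE g (F k)) atTop (𝓝 0)) :
    WeaklyNullSeq F := by
  classical
  -- Step 1: uniform boundedness via Banach–Steinhaus
  obtain ⟨C₀, hC₀⟩ : ∃ C', ∀ k, ‖pairCLM (F k)‖ ≤ C' := by
    apply banach_steinhaus
    intro g
    have h0 : Tendsto (fun k => pairE (g : PreE) (F k)) atTop (𝓝 0) :=
      hwstar _ (lp_one_summable g)
    obtain ⟨C, hC⟩ := h0.norm.bddAbove_range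
    exact ⟨C, fun k => hC ⟨k, rfl⟩⟩
  set C : ℝ := max C₀ 0 with hCdef
  have hC0 : 0 ≤ C := le_max_right _ _
  have hC : ∀ k, ‖F k‖ ≤ C := by
    intro k
    apply lp.norm_le_of_forall_le hC0
    intro n
    by_cases hv : (F k : PreE) n = 0
    · simp [hv, hC0]
    · have hvpos : 0 < ‖(F k : PreE) n‖ := norm_pos_iff.2 hv
      have hz : ∀ m, m ≠ n →
          ∑ i, (lp.single 1 n ((F k : PreE) n) : PreE) m i * (F k : PreE) m i = 0 := by
        intro m hm
        have h0 : (lp.single 1 n ((F k : PreE) n) : PreE) m = 0 :=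
          lp.single_apply_ne 1 n _ hm
        rw [h0]; simp
      have hval : pairCLM (F k) (lp.single 1 n ((F k : PreE) n)) = ‖(F k : PreE) n‖ ^ 2 := by
        rw [pairCLM_apply]
        unfold pairE
        rw [tsum_eq_single n hz, lp.single_apply_self, sum_mul_eq_inner,
          real_inner_self_eq_norm_sq]
      have hle := (pairCLM (F k)).le_opNorm (lp.single 1 n ((F k : PreE) n))
      rw [hval, lp.norm_single (p := 1) (by norm_num) n ((F k : PreE) n), Real.norm_eq_abs,
        abs_of_nonneg (by positivity)] at hle
      have h2 : ‖(F k : PreE) n‖ * ‖(F k : PreE) n‖ ≤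
          ‖pairCLM (F k)‖ * ‖(F k : PreE) n‖ := by
        nlinarith [hle]
      exact (le_of_mul_le_mul_right h2 hvpos).trans ((hC₀ k).trans (le_max_left _ _))
  -- Step 2: the key finite-sum estimate for an arbitrary functional
  have key : ∀ (φ : Epp →L[ℝ] ℝ) (S : Finset ℕ),
      ∑ k ∈ S, |φ (F k)| ≤ ‖φ‖ * (C * Real.sqrt S.card) := by
    intro φ S
    set σ : ℕ → ℝ := fun k => if φ (F k) < 0 then -1 else 1 with hσdef
    have hσ : ∀ k, |σ k| = 1 := by
      intro k
      simp only [hσdef]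
      split <;> simp
    have h1 : ∀ k, σ k * φ (F k) = |φ (F k)| := by
      intro k
      simp only [hσdef]
      split
      · rename_i h; rw [abs_of_neg h]; ring
      · rename_i h; rw [abs_of_nonneg (not_lt.1 h)]; ring
    set G : Epp := ∑ k ∈ S, σ k • F k with hGdef
    have hGco : ∀ n, (G : PreE) n = ∑ k ∈ S, σ k • (F k : PreE) n := by
      intro n
      rw [hGdef, lp.coeFn_sum, Finset.sum_apply]
      apply Finset.sum_congr rfl
      intro k _
      rw [lp.coeFn_smul]
      rfl
    have hφG : φ G = ∑ k ∈ S, |φ (F k)| := by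
      rw [hGdef, map_sum]
      apply Finset.sum_congr rfl
      intro k _
      rw [map_smul, smul_eq_mul, h1]
    have hGnorm : ‖G‖ ≤ C * Real.sqrt S.card := by
      apply lp.norm_le_of_forall_le (mul_nonneg hC0 (Real.sqrt_nonneg _))
      intro n
      rw [hGco n]
      have horth : ∀ k ∈ S, ∀ j ∈ S, j ≠ k →
          (inner ℝ (σ j • (F j : PreE) n) (σ k • (F k : PreE) n) : ℝ) = 0 := by
        intro k _ j _ hjk
        rw [real_inner_smul_left, real_inner_smul_right, ← sum_mul_eq_inner]
        have hz : ∀ i, (F j : PreE) n i * (F k : PreE) n i = 0 := fun i =>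
          mul_eq_zero_of_min_abs (hdisj hjk n i)
        simp [hz]
      have hsq : ‖∑ k ∈ S, σ k • (F k : PreE) n‖ ^ 2 =
          ∑ k ∈ S, ‖σ k • (F k : PreE) n‖ ^ 2 := by
        rw [← real_inner_self_eq_norm_sq, sum_inner]
        apply Finset.sum_congr rfl
        intro k hk
        rw [inner_sum, Finset.sum_eq_single_of_mem k hk]
        · rw [real_inner_self_eq_norm_sq]
        · intro j hj hjk
          rw [real_inner_comm]
          exact horth k hk j hj hjk
      have hblk : ∀ k ∈ S, ‖σ k • (F k : PreE) n‖ ^ 2 ≤ C ^ 2 := by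
        intro k _
        have he : ‖σ k • (F k : PreE) n‖ = ‖(F k : PreE) n‖ := by
          rw [norm_smul, Real.norm_eq_abs, hσ k, one_mul]
        rw [he]
        have hb := (blk_norm_le (F k) n).trans (hC k)
        nlinarith [norm_nonneg ((F k : PreE) n)]
      have hsum : ‖∑ k ∈ S, σ k • (F k : PreE) n‖ ^ 2 ≤ S.card * C ^ 2 := by
        rw [hsq]
        calc ∑ k ∈ S, ‖σ k • (F k : PreE) n‖ ^ 2 ≤ ∑ _k ∈ S, C ^ 2 :=
              Finset.sum_le_sum hblk
          _ = S.card * C ^ 2 := by rw [Finset.sum_const, nsmul_eq_mul]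
      calc ‖∑ k ∈ S, σ k • (F k : PreE) n‖
          = Real.sqrt (‖∑ k ∈ S, σ k • (F k : PreE) n‖ ^ 2) := by
            rw [Real.sqrt_sq (norm_nonneg _)]
        _ ≤ Real.sqrt (S.card * C ^ 2) := Real.sqrt_le_sqrt hsum
        _ = C * Real.sqrt S.card := by
            rw [Real.sqrt_mul (Nat.cast_nonneg _), Real.sqrt_sq hC0, mul_comm]
    calc ∑ k ∈ S, |φ (F k)| = φ G := hφG.symm
      _ ≤ |φ G| := le_abs_self _
      _ ≤ ‖φ‖ * ‖G‖ := φ.le_opNorm G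
      _ ≤ ‖φ‖ * (C * Real.sqrt S.card) :=
          mul_le_mul_of_nonneg_left hGnorm (norm_nonneg _)
  -- Step 3: conclude weak nullity
  have main : ∀ φ : Epp →L[ℝ] ℝ, Tendsto (fun k => φ (F k)) atTop (𝓝 0) := by
    intro φ
    rw [Metric.tendsto_atTop]
    intro ε hε
    have hfin : {k : ℕ | ε ≤ |φ (F k)|}.Finite := by
      by_contra hinf
      set D : ℝ := ‖φ‖ * C with hDdef
      have hD0 : 0 ≤ D := by positivity
      set N : ℕ := ⌊(D / ε) ^ 2⌋₊ + 1 with hNdef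
      obtain ⟨S, hS, hcard⟩ :=
        (show Set.Infinite {k : ℕ | ε ≤ |φ (F k)|} from hinf).exists_subset_card_eq N
      have h1 : (N : ℝ) * ε ≤ ∑ k ∈ S, |φ (F k)| := by
        rw [← hcard]
        calc (S.card : ℝ) * ε = ∑ _k ∈ S, ε := by rw [Finset.sum_const, nsmul_eq_mul]
          _ ≤ ∑ k ∈ S, |φ (F k)| := Finset.sum_le_sum fun k hk => hS hk
      have h2 : (N : ℝ) * ε ≤ D * Real.sqrt N := by
        have hk2 := key φ S
        rw [hcard] at hk2
        calc (N : ℝ) * ε ≤ ∑ k ∈ S, |φ (F k)| := h1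
          _ ≤ ‖φ‖ * (C * Real.sqrt N) := hk2
          _ = D * Real.sqrt N := by rw [hDdef]; ring
      have hNpos : (0 : ℝ) < N := by
        rw [hNdef]; push_cast; positivity
      have hsqrtpos : 0 < Real.sqrt N := Real.sqrt_pos.2 hNpos
      have hNsq : (N : ℝ) = Real.sqrt N * Real.sqrt N :=
        (Real.mul_self_sqrt hNpos.le).symm
      have h3 : Real.sqrt N * ε ≤ D := by
        nlinarith [h2, hNsq, hsqrtpos]
      have h4 : Real.sqrt N ≤ D / ε := by
        rw [le_div_iff₀ hε]
        exact h3
      have h5 : (N : ℝ) ≤ (D / ε) ^ 2 := by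
        calc (N : ℝ) = Real.sqrt N * Real.sqrt N := hNsq
          _ ≤ (D / ε) * (D / ε) := mul_le_mul h4 h4 hsqrtpos.le (by positivity)
          _ = (D / ε) ^ 2 := (sq (D / ε)).symm
      have h6 : ((D / ε) ^ 2 : ℝ) < N := by
        rw [hNdef]
        push_cast
        exact Nat.lt_floor_add_one _
      linarith
    obtain ⟨M, hM⟩ := hfin.bddAbove
    refine ⟨M + 1, fun k hk => ?_⟩
    rw [Real.dist_eq, sub_zero]
    by_contra hcon
    push_neg at hcon
    have hmem : k ∈ {k : ℕ | ε ≤ |φ (F k)|} := hcon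
    have := hM hmem
    omega
  -- translate to the weak topology
  unfold WeaklyNullSeq
  have hinj : Function.Injective ⇑(topDualPairing ℝ Epp).flip := by
    intro x y hxy
    have h : ∀ φ : StrongDual ℝ Epp, φ (x - y) = 0 := by
      intro φ
      have hφ := congrArg (fun ψ => ψ φ) hxy
      simp only [LinearMap.flip_apply, topDualPairing_apply] at hφ
      rw [map_sub, hφ, sub_self]
    have h0 := NormedSpace.eq_zero_of_forall_dual_eq_zero ℝ h
    rwa [sub_eq_zero] at h0
  rw [show (Tendsto (fun n => toWeakSpace ℝ Epp (F n)) atTop (𝓝 0)) ↔ _ from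
    WeakBilin.tendsto_iff_forall_eval_tendsto _ hinj]
  intro φ
  have heq : (fun k => (topDualPairing ℝ Epp).flip (toWeakSpace ℝ Epp (F k)) φ) =
      fun k => φ (F k) := rfl
  rw [heq]
  have h0 : (topDualPairing ℝ Epp).flip (0 : WeakSpace ℝ Epp) φ = 0 := by
    exact map_zero φ
  rw [h0]
  exact main φ
end
end

section
/- The Banach lattice E' = (⊕_{n=1}^∞ ℓ_2^n)_{ℓ_1} does not have the positive Grothendieck property. -/
open Filter Topology

noncomputable section

/-- Coordinate bound in a Euclidean block. -/
lemma coord_abs_le (n : ℕ) (x : Blk n) (i : Fin (n + 1)) : |x i| ≤ ‖x‖ := by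
  have h : x i = inner ℝ (EuclideanSpace.single i (1 : ℝ)) x := by
    rw [EuclideanSpace.inner_single_left]; simp
  rw [h]
  calc |inner ℝ (EuclideanSpace.single i (1 : ℝ)) x| ≤ ‖EuclideanSpace.single i (1 : ℝ)‖ * ‖x‖ :=
        abs_real_inner_le_norm _ _
    _ = ‖x‖ := by simp

/-- A fixed ultrafilter extending `atTop` on `ℕ`. -/
def myU : Ultrafilter ℕ := Ultrafilter.of atTop

lemma myU_le : (myU : Filter ℕ) ≤ atTop := Ultrafilter.of_le _

/-- The diagonal sequence of an element of `E''`. -/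
def dgl (x : Epp) : ℕ → ℝ := fun n => (x : PreE) n (Fin.last n)

lemma dgl_bound (x : Epp) (n : ℕ) : |dgl x n| ≤ ‖x‖ :=
  (coord_abs_le n _ _).trans (lp.norm_apply_le_norm (by norm_num) x n)

lemma exists_lim (x : Epp) : ∃ a, Tendsto (dgl x) myU (𝓝 a) := by
  have hc : IsCompact (Set.Icc (-‖x‖) ‖x‖) := isCompact_Icc
  have hle : (myU.map (dgl x) : Filter ℝ) ≤ 𝓟 (Set.Icc (-‖x‖) ‖x‖) := by
    rw [Filter.le_principal_iff]
    refine Filter.mem_map.mpr ?_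
    exact Filter.univ_mem' fun n => abs_le.mp (dgl_bound x n)
  obtain ⟨a, _, ha⟩ := hc.ultrafilter_le_nhds (myU.map (dgl x)) hle
  exact ⟨a, ha⟩

/-- A Banach-limit-like value along `myU` of the diagonal sequence. -/
def philim (x : Epp) : ℝ := Classical.choose (exists_lim x)

lemma philim_spec (x : Epp) : Tendsto (dgl x) myU (𝓝 (philim x)) :=
  Classical.choose_spec (exists_lim x)

lemma philim_eq {x : Epp} {a : ℝ} (h : Tendsto (dgl x) myU (𝓝 a)) : philim x = a :=
  tendsto_nhds_unique (philim_spec x) h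

/-- The Banach-limit-type continuous functional on `E''`. -/
def phi : Epp →L[ℝ] ℝ :=
  LinearMap.mkContinuous
    { toFun := philim
      map_add' := fun x y => philim_eq (by
        have h : dgl (x + y) = fun n => dgl x n + dgl y n := by
          funext n; simp [dgl, lp.coeFn_add]
        rw [h]
        exact (philim_spec x).add (philim_spec y))
      map_smul' := fun c x => philim_eq (by
        have h : dgl (c • x) = fun n => c * dgl x n := by
          funext n; simp [dgl, lp.coeFn_smul]
        rw [h]
        simpa using (philim_spec x).const_mul c) }
    1
    (fun x => by
      simp only [LinearMap.coe_mk, AddHom.coe_mk, one_mul, Real.norm_eq_abs]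
      have h : Tendsto (fun n => |dgl x n|) myU (𝓝 |philim x|) :=
        (continuous_abs.tendsto _).comp (philim_spec x)
      exact le_of_tendsto' h fun n => dgl_bound x n)

/-- The sequence of diagonal "tail indicators" in `E''`. -/
def FF (k : ℕ) : Epp :=
  ⟨(fun n => if k ≤ n then EuclideanSpace.single (Fin.last n) (1 : ℝ) else 0 : PreE), by
    apply memℓp_infty
    refine ⟨1, ?_⟩
    rintro r ⟨n, rfl⟩
    by_cases h : k ≤ n <;> simp [h]⟩

lemma FF_apply (k n : ℕ) :
    (FF k : PreE) n = if k ≤ n then EuclideanSpace.single (Fin.last n) (1 : ℝ) else 0 := rfl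

lemma phi_FF (k : ℕ) : phi (FF k) = 1 := by
  have h : Tendsto (dgl (FF k)) myU (𝓝 1) := by
    apply tendsto_const_nhds.congr'
    have : ∀ᶠ n in atTop, (1 : ℝ) = dgl (FF k) n := by
      filter_upwards [eventually_ge_atTop k] with n hn
      simp [dgl, FF_apply, hn]
    exact this.filter_mono myU_le
  exact philim_eq h

/-- `E' = (⊕ ℓ₂ⁿ)_{ℓ₁}` fails the positive Grothendieck property: there is a positive
sequence in `E'' = (⊕ ℓ₂ⁿ)_{ℓ∞}` which is weak* null (null against every `g ∈ E'`) but not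
weakly null in `E''`. -/

theorem stmt_10 :
    ∃ F : ℕ → Epp,
      (∀ k n i, 0 ≤ (F k : PreE) n i) ∧
      (∀ g : PreE, memE1 g → Tendsto (fun k => pairE g (F k)) atTop (𝓝 0)) ∧
      ¬ WeaklyNullSeq F := by
  refine ⟨FF, ?_, ?_, ?_⟩
  · intro k n i
    rw [FF_apply]
    by_cases h : k ≤ n
    · simp only [if_pos h, EuclideanSpace.single_apply]
      split <;> norm_num
    · simp [h]
  · intro g _
    set a : ℕ → ℝ := fun n => g n (Fin.last n) with ha
    have key : ∀ k, pairE g (FF k) = ∑' n, if k ≤ n then a n else 0 := by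
      intro k
      unfold pairE
      congr 1
      funext n
      rw [FF_apply]
      by_cases h : k ≤ n
      · simp only [if_pos h, EuclideanSpace.single_apply]
        rw [show (∑ i, g n i * if i = Fin.last n then (1 : ℝ) else 0)
            = ∑ i, if i = Fin.last n then g n i else 0 from by
          apply Finset.sum_congr rfl; intro i _; split <;> simp]
        simp [Finset.sum_ite_eq', ha]
      · simp [h]
    have shift : ∀ k, (∑' n, if k ≤ n then a n else 0) = ∑' m, a (m + k) := by
      intro k
      have hinj : Function.Injective (fun m : ℕ => m + k) := add_left_injective k
      have h2 := hinj.tsum_eq (f := fun n => if k ≤ n then a n else 0) (by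
        intro n hn
        simp only [Function.mem_support, ne_eq] at hn
        by_cases h : k ≤ n
        · exact ⟨n - k, by simpa using Nat.sub_add_cancel h⟩
        · exact absurd (by simp [h]) hn)
      rw [← h2]
      exact tsum_congr fun m => by simp [Nat.le_add_left]
    simp only [key, shift]
    exact tendsto_sum_nat_add a
  · intro hweak
    have hc : Continuous fun x : WeakSpace ℝ Epp => (topDualPairing ℝ Epp).flip x phi :=
      WeakBilin.eval_continuous _ phi
    have h0 : Tendsto (fun k => phi (FF k)) atTop (𝓝 0) := by
      have := (hc.tendsto 0).comp hweak
      have e : ((topDualPairing ℝ Epp).flip (0 : WeakSpace ℝ Epp)) phi = 0 := map_zero phi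
      rw [e] at this
      exact this
    simp only [phi_FF] at h0
    exact one_ne_zero (tendsto_nhds_unique tendsto_const_nhds h0)
end
end
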